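/- Maximum principle for linear ODE systems with Metzler matrices: Let n ≥ 1, T > 0, and let u = (u_1, …, u_n) : [0,T) → ℝⁿ be continuously differentiable. Let A be a constant n × n real matrix whose off-diagonal entries are all non-negative (i.e. A_{ij} ≥ 0 whenever i ≠ j), and assume that (d/dt) u_i(t) ≤ (A u(t))_i for every i = 1, …, n and every t ∈ [0,T). If u_i(0) ≤ 0 for all i, then u_i(t) ≤ 0 for all i = 1, …, n and all t ∈ [0,T). -/

import Mathlib

open Topology Filter


/-!
STATEMENT 6: Maximum principle for linear ODE systems with Metzler matrices.

Let `n ≥ 1`, `T > 0`, and `u : [0,T) → ℝⁿ` continuously differentiable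
(with derivative `u'`). Let `A` be a constant `n × n` real matrix with
non-negative off-diagonal entries, and assume `(d/dt) u_i(t) ≤ (A u(t))_i`
for every `i` and every `t ∈ [0,T)`. If `u_i(0) ≤ 0` for all `i`, then
`u_i(t) ≤ 0` for all `i` and all `t ∈ [0,T)`.
-/

theorem maximum_principle_linear_ODE
    (n : ℕ) (hn : 1 ≤ n) (T : ℝ) (hT : 0 < T)
    (u u' : Fin n → ℝ → ℝ) (A : Matrix (Fin n) (Fin n) ℝ)
    (hderiv : ∀ i : Fin n, ∀ t ∈ Set.Ico (0 : ℝ) T,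
      HasDerivWithinAt (u i) (u' i t) (Set.Ico 0 T) t)
    (hcont : ∀ i : Fin n, ContinuousOn (u' i) (Set.Ico 0 T))
    (hA : ∀ i j : Fin n, i ≠ j → 0 ≤ A i j)
    (hineq : ∀ i : Fin n, ∀ t ∈ Set.Ico (0 : ℝ) T,
      u' i t ≤ ∑ j : Fin n, A i j * u j t)
    (h0 : ∀ i : Fin n, u i 0 ≤ 0) :
    ∀ i : Fin n, ∀ t ∈ Set.Ico (0 : ℝ) T, u i t ≤ 0 := by
  have hnE : Nonempty (Fin n) := ⟨⟨0, hn⟩⟩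
  have hne : (Finset.univ : Finset (Fin n)).Nonempty := Finset.univ_nonempty
  set K : ℝ := ∑ i, ∑ j, |A i j| with hKdef
  have hKrow : ∀ i : Fin n, (∑ j, |A i j|) ≤ K := fun i =>
    Finset.single_le_sum (f := fun i => ∑ j, |A i j|)
      (fun i _ => Finset.sum_nonneg fun j _ => abs_nonneg _) (Finset.mem_univ i)
  have hK0 : 0 ≤ K :=
    Finset.sum_nonneg fun i _ => Finset.sum_nonneg fun j _ => abs_nonneg _
  set f : ℝ → ℝ := fun t => Finset.univ.sup' hne (fun j => u j t ⊔ 0) with hfdef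
  have hfle : ∀ t (j : Fin n), u j t ⊔ 0 ≤ f t := fun t j => by
    rw [hfdef]; exact Finset.le_sup' (fun j => u j t ⊔ 0) (Finset.mem_univ j)
  have hf0 : ∀ t, 0 ≤ f t := fun t =>
    le_trans le_sup_right (hfle t ⟨0, hn⟩)
  have hule : ∀ t (j : Fin n), u j t ≤ f t := fun t j =>
    le_trans le_sup_left (hfle t j)
  have hucont : ∀ i : Fin n, ContinuousOn (u i) (Set.Ico 0 T) := fun i x hx =>
    (hderiv i x hx).continuousWithinAt
  have hfcont : ContinuousOn f (Set.Ico 0 T) := by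
    intro x hx
    exact ContinuousWithinAt.finset_sup'_apply hne fun j _ =>
      ((hucont j x hx).sup continuousWithinAt_const)
  -- main Gronwall step
  have key : ∀ b ∈ Set.Ico (0 : ℝ) T, f b ≤ 0 := by
    intro b hb
    have hsub : Set.Icc (0 : ℝ) b ⊆ Set.Ico 0 T := fun z hz =>
      ⟨hz.1, lt_of_le_of_lt hz.2 hb.2⟩
    have hsub' : Set.Ico (0 : ℝ) b ⊆ Set.Ico 0 T := fun z hz =>
      ⟨hz.1, lt_trans hz.2 hb.2⟩
    have hmain := le_gronwallBound_of_liminf_deriv_right_le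
      (f := f) (f' := fun t => K * f t) (δ := 0) (K := K) (ε := 0) (a := 0) (b := b)
      (hfcont.mono hsub) ?_ ?_ ?_
    · have := hmain b ⟨hb.1, le_rfl⟩
      rwa [sub_zero, gronwallBound_ε0_δ0] at this
    · -- liminf slope condition
      intro x hx r hr
      have hxT : x ∈ Set.Ico 0 T := hsub' hx
      have hrpos : 0 < r := lt_of_le_of_lt (mul_nonneg hK0 (hf0 x)) hr
      have hIoo : Set.Ioo x T ∈ 𝓝[>] x := Ioo_mem_nhdsGT_of_mem ⟨le_rfl, hxT.2⟩
      have hmem : Set.Ico 0 T ∈ 𝓝[>] x :=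
        Filter.mem_of_superset hIoo fun z hz => ⟨le_trans hxT.1 hz.1.le, hz.2⟩
      have hle : 𝓝[>] x ≤ 𝓝[Set.Ico 0 T] x := nhdsWithin_le_iff.mpr hmem
      -- a frequently-achieving index
      have hach : ∃ i : Fin n, ∃ᶠ z in 𝓝[>] x, f z = u i z ⊔ 0 := by
        by_contra h
        push_neg at h
        have h' : ∀ᶠ z in 𝓝[>] x, ∀ i : Fin n, f z ≠ u i z ⊔ 0 :=
          Filter.eventually_all.mpr fun i => h i
        obtain ⟨z, hz⟩ := h'.exists
        obtain ⟨i, _, hi⟩ := Finset.exists_mem_eq_sup' hne (fun j => u j z ⊔ 0)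
        exact hz i hi
      obtain ⟨i, hfreq⟩ := hach
      have htf : Filter.Tendsto f (𝓝[>] x) (𝓝 (f x)) :=
        (hfcont x hxT).mono_left hle
      have htu : Filter.Tendsto (u i) (𝓝[>] x) (𝓝 (u i x)) :=
        (hucont i x hxT).mono_left hle
      have htg : Filter.Tendsto (fun z => u i z ⊔ 0) (𝓝[>] x) (𝓝 (u i x ⊔ 0)) :=
        htu.sup_nhds tendsto_const_nhds
      have heq : f x = u i x ⊔ 0 :=
        tendsto_nhds_unique_of_frequently_eq htf htg hfreq
      rcases lt_or_ge (u i x) 0 with hneg | hpos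
      · -- u i x < 0, so f x = 0 and eventually f z = 0 on the frequent set
        have hfx : f x = 0 := by rw [heq, sup_eq_right.mpr hneg.le]
        have hev : ∀ᶠ z in 𝓝[>] x, u i z < 0 :=
          htu.eventually_lt_const hneg
        refine ((hfreq.and_eventually hev).mono ?_)
        rintro z ⟨hz1, hz2⟩
        rw [hz1, sup_eq_right.mpr hz2.le, hfx]
        simpa using hrpos
      · -- u i x ≥ 0, so f x = u i x
        have hfx : f x = u i x := by rw [heq, sup_eq_left.mpr hpos]
        have hub : u' i x ≤ K * f x := by
          calc u' i x ≤ ∑ j, A i j * u j x := hineq i x hxT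
            _ ≤ ∑ j, |A i j| * f x := by
                refine Finset.sum_le_sum fun j _ => ?_
                rcases eq_or_ne j i with rfl | hji
                · rw [← hfx]
                  exact mul_le_mul_of_nonneg_right (le_abs_self _) (hf0 x)
                · calc A i j * u j x ≤ A i j * f x :=
                        mul_le_mul_of_nonneg_left (hule x j) (hA i j (Ne.symm hji))
                    _ ≤ |A i j| * f x :=
                        mul_le_mul_of_nonneg_right (le_abs_self _) (hf0 x)
            _ = (∑ j, |A i j|) * f x := (Finset.sum_mul _ _ _).symm
            _ ≤ K * f x := mul_le_mul_of_nonneg_right (hKrow i) (hf0 x)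
        have hslope : Filter.Tendsto (fun z => (z - x)⁻¹ * (u i z - u i x))
            (𝓝[>] x) (𝓝 (u' i x)) := by
          have h1 := (hasDerivWithinAt_iff_tendsto_slope.mp (hderiv i x hxT))
          have hle2 : 𝓝[>] x ≤ 𝓝[Set.Ico 0 T \ {x}] x := by
            refine nhdsWithin_le_iff.mpr (Filter.mem_of_superset hIoo fun z hz => ?_)
            exact ⟨⟨le_trans hxT.1 hz.1.le, hz.2⟩, ne_of_gt hz.1⟩
          have := h1.mono_left hle2
          refine this.congr fun z => ?_
          rw [slope_def_field, div_eq_inv_mul]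
        have hev : ∀ᶠ z in 𝓝[>] x, (z - x)⁻¹ * (u i z - u i x) < r :=
          hslope.eventually_lt_const (lt_of_le_of_lt hub hr)
        refine ((hfreq.and_eventually (hev.and (eventually_mem_nhdsWithin))).mono ?_)
        rintro z ⟨hz1, hz2, hz3⟩
        have hzx : (0:ℝ) < z - x := sub_pos.mpr hz3
        have hdiff : f z - f x ≤ (u i z - u i x) ⊔ 0 := by
          rw [hz1, heq]
          simpa using max_sub_max_le_max (u i z) 0 (u i x) 0
        calc (z - x)⁻¹ * (f z - f x)
            ≤ (z - x)⁻¹ * ((u i z - u i x) ⊔ 0) :=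
              mul_le_mul_of_nonneg_left hdiff (inv_nonneg.mpr hzx.le)
          _ = ((z - x)⁻¹ * (u i z - u i x)) ⊔ ((z - x)⁻¹ * 0) := by
              exact mul_max_of_nonneg _ _ (inv_nonneg.mpr hzx.le)
          _ < r := by rw [mul_zero]; exact max_lt hz2 hrpos
    · -- f 0 ≤ 0
      exact Finset.sup'_le hne _ fun j _ => sup_le (h0 j) le_rfl
    · intro x hx
      rw [add_zero]
  -- conclude
  intro i t ht
  exact le_trans (hule t i) (key t ht)
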